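/- Let H_S be a Hermitian d×d complex matrix, H_SE a Hermitian operator on ℂ^d ⊗ ℂ^D, and U_0, …, U_{n−1} unitary d×d matrices such that (i) the effective system Hamiltonian H_S^eff := (1/n) Σ_{k=0}^{n−1} U_k H_S U_k† is not a scalar multiple of the identity, and (ii) (1/n) Σ_{k=0}^{n−1} (U_k ⊗ 1_D) H_SE (U_k† ⊗ 1_D) = c (1_d ⊗ J_E) for some real constant c and Hermitian D×D matrix J_E. Define the mixed unitary channel Φ(X) := (1/n) Σ_{k=0}^{n−1} U_k X U_k†. Then Φ(H_S) is not a scalar multiple of the identity, and for every unit vector ψ ∈ ℂ^D: (a) Tr[(Φ(H_S) − (Tr H_S / d)·1_d) · Φ(⟨ψ|H_SE|ψ⟩_E)] = 0, and (b) for every orthonormal eigenbasis {v_i} of Φ(H_S), the diagonal entries ⟨v_i, Φ(⟨ψ|H_SE|ψ⟩_E) v_i⟩ are all equal. -/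

import Mathlib

open Matrix Complex
open scoped Kronecker

/-- The partial expectation `⟨ψ|X|ψ⟩_E` of an operator `X` on `ℂ^d ⊗ ℂ^D`
with respect to an environment vector `ψ ∈ ℂ^D`. -/
noncomputable def pexp {d D : ℕ} (X : Matrix (Fin d × Fin D) (Fin d × Fin D) ℂ)
    (ψ : Fin D → ℂ) : Matrix (Fin d) (Fin d) ℂ :=
  fun i j => ∑ a, ∑ b, star (ψ a) * X (i, a) (j, b) * ψ b

/-- The equal-weight mixed unitary channel `X ↦ (1/n) Σ_k U_k X U_k†`. -/
noncomputable def mixChan {d n : ℕ} (U : Fin n → Matrix (Fin d) (Fin d) ℂ)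
    (X : Matrix (Fin d) (Fin d) ℂ) : Matrix (Fin d) (Fin d) ℂ :=
  ((n : ℂ))⁻¹ • ∑ k, U k * X * (U k)ᴴ

/-- The channel `X ↦ (1/n) Σ_k (U_k ⊗ 1_D) X (U_k† ⊗ 1_D)` on the joint system. -/
noncomputable def mixChanE {d D n : ℕ} (U : Fin n → Matrix (Fin d) (Fin d) ℂ)
    (X : Matrix (Fin d × Fin D) (Fin d × Fin D) ℂ) :
    Matrix (Fin d × Fin D) (Fin d × Fin D) ℂ :=
  ((n : ℂ))⁻¹ • ∑ k, (U k ⊗ₖ (1 : Matrix (Fin D) (Fin D) ℂ)) * X *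
    ((U k)ᴴ ⊗ₖ (1 : Matrix (Fin D) (Fin D) ℂ))

lemma pexp_conj {d D : ℕ} (A B : Matrix (Fin d) (Fin d) ℂ)
    (X : Matrix (Fin d × Fin D) (Fin d × Fin D) ℂ) (ψ : Fin D → ℂ) :
    pexp ((A ⊗ₖ (1 : Matrix (Fin D) (Fin D) ℂ)) * X * (B ⊗ₖ (1 : Matrix (Fin D) (Fin D) ℂ))) ψ
      = A * pexp X ψ * B := by
  ext i j
  simp only [pexp, Matrix.mul_apply, Fintype.sum_prod_type, Matrix.kroneckerMap_apply,
    Matrix.one_apply, ite_mul, mul_ite, zero_mul, mul_zero, Finset.sum_ite_eq,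
    Finset.sum_ite_eq', Finset.mem_univ, if_true, Finset.mul_sum, Finset.sum_mul]
  conv_lhs => enter [2, a, 2, b]; rw [Finset.sum_comm]
  conv_lhs => enter [2, a]; rw [Finset.sum_comm]
  rw [Finset.sum_comm]
  conv_rhs => rw [Finset.sum_comm]
  conv_rhs => enter [2, p]; rw [Finset.sum_comm]
  conv_rhs => enter [2, p, 2, a]; rw [Finset.sum_comm]
  refine Finset.sum_congr rfl fun p _ => Finset.sum_congr rfl fun a _ =>
    Finset.sum_congr rfl fun b _ => Finset.sum_congr rfl fun r _ => by ring

lemma pexp_smul {d D : ℕ} (r : ℂ) (X : Matrix (Fin d × Fin D) (Fin d × Fin D) ℂ)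
    (ψ : Fin D → ℂ) : pexp (r • X) ψ = r • pexp X ψ := by
  ext i j
  simp only [pexp, Matrix.smul_apply, smul_eq_mul, Finset.mul_sum]
  refine Finset.sum_congr rfl fun a _ => Finset.sum_congr rfl fun b _ => by ring

lemma pexp_sum {d D n : ℕ} (f : Fin n → Matrix (Fin d × Fin D) (Fin d × Fin D) ℂ)
    (ψ : Fin D → ℂ) : pexp (∑ k, f k) ψ = ∑ k, pexp (f k) ψ := by
  ext i j
  simp only [pexp, Finset.sum_apply, Matrix.sum_apply, Finset.mul_sum, Finset.sum_mul]
  conv_lhs => enter [2, a]; rw [Finset.sum_comm]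
  rw [Finset.sum_comm]

lemma pexp_mixChanE {d D n : ℕ} (U : Fin n → Matrix (Fin d) (Fin d) ℂ)
    (X : Matrix (Fin d × Fin D) (Fin d × Fin D) ℂ) (ψ : Fin D → ℂ) :
    pexp (mixChanE U X) ψ = mixChan U (pexp X ψ) := by
  rw [mixChanE, mixChan, pexp_smul, pexp_sum]
  congr 1
  exact Finset.sum_congr rfl fun k _ => pexp_conj _ _ _ _

lemma pexp_one_kron {d D : ℕ} (JE : Matrix (Fin D) (Fin D) ℂ) (ψ : Fin D → ℂ) :
    pexp ((1 : Matrix (Fin d) (Fin d) ℂ) ⊗ₖ JE) ψ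
      = (star ψ ⬝ᵥ JE.mulVec ψ) • (1 : Matrix (Fin d) (Fin d) ℂ) := by
  ext i j
  simp only [pexp, Matrix.kroneckerMap_apply, Matrix.smul_apply, Matrix.one_apply,
    dotProduct, Matrix.mulVec, dotProduct, Pi.star_apply, smul_eq_mul, Finset.mul_sum]
  by_cases h : i = j <;> simp [h, Finset.mul_sum, mul_assoc]

theorem stmt_0 {d D n : ℕ} (hd : 0 < d) (hn : 0 < n)
    (HS : Matrix (Fin d) (Fin d) ℂ) (hHS : HS.IsHermitian)
    (HSE : Matrix (Fin d × Fin D) (Fin d × Fin D) ℂ) (hHSE : HSE.IsHermitian)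
    (U : Fin n → Matrix (Fin d) (Fin d) ℂ)
    (hU : ∀ k, U k * (U k)ᴴ = 1)
    -- (i) the effective system Hamiltonian is not a scalar multiple of the identity
    (hi : ¬ ∃ c : ℂ, mixChan U HS = c • (1 : Matrix (Fin d) (Fin d) ℂ))
    -- (ii) the effective interaction is `c (1_d ⊗ J_E)`
    (hii : ∃ (c : ℝ) (JE : Matrix (Fin D) (Fin D) ℂ), JE.IsHermitian ∧
      mixChanE U HSE = (c : ℂ) • ((1 : Matrix (Fin d) (Fin d) ℂ) ⊗ₖ JE)) :
    -- Φ(H_S) is not a scalar multiple of the identity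
    (¬ ∃ c : ℂ, mixChan U HS = c • (1 : Matrix (Fin d) (Fin d) ℂ)) ∧
    ∀ ψ : Fin D → ℂ, star ψ ⬝ᵥ ψ = 1 →
      -- (a) the orthogonality condition
      (Matrix.trace ((mixChan U HS - (HS.trace / (d : ℂ)) • (1 : Matrix (Fin d) (Fin d) ℂ)) *
          mixChan U (pexp HSE ψ)) = 0) ∧
      -- (b) constant diagonal in every orthonormal eigenbasis of Φ(H_S)
      (∀ v : Fin d → (Fin d → ℂ),
        (∀ i j, star (v i) ⬝ᵥ v j = if i = j then (1 : ℂ) else 0) →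
        (∀ i, ∃ μ : ℝ, (mixChan U HS).mulVec (v i) = (μ : ℂ) • v i) →
        ∀ i j, star (v i) ⬝ᵥ (mixChan U (pexp HSE ψ)).mulVec (v i) =
          star (v j) ⬝ᵥ (mixChan U (pexp HSE ψ)).mulVec (v j)) := by
  obtain ⟨c, JE, hJE, hEq⟩ := hii
  refine ⟨hi, fun ψ hψ => ?_⟩
  set s : ℂ := (c : ℂ) * (star ψ ⬝ᵥ JE.mulVec ψ) with hs
  have key : mixChan U (pexp HSE ψ) = s • (1 : Matrix (Fin d) (Fin d) ℂ) := by
    rw [← pexp_mixChanE, hEq, pexp_smul, pexp_one_kron, smul_smul]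
  have htrΦ : (mixChan U HS).trace = HS.trace := by
    rw [mixChan, Matrix.trace_smul, Matrix.trace_sum]
    have : ∀ k : Fin n, (U k * HS * (U k)ᴴ).trace = HS.trace := by
      intro k
      rw [Matrix.trace_mul_comm, ← Matrix.mul_assoc,
        (mul_eq_one_comm).mp (hU k), Matrix.one_mul]
    rw [Finset.sum_congr rfl fun k _ => this k, Finset.sum_const, Finset.card_univ,
      Fintype.card_fin, ← Nat.cast_smul_eq_nsmul ℂ, smul_smul, inv_mul_cancel₀, one_smul]
    exact_mod_cast hn.ne'
  constructor
  · rw [key, Matrix.mul_smul, Matrix.trace_smul, Matrix.mul_one, Matrix.trace_sub,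
      htrΦ, Matrix.trace_smul, Matrix.trace_one]
    have hd' : (d : ℂ) ≠ 0 := by exact_mod_cast hd.ne'
    simp [div_mul_cancel₀, hd']
  · intro v hv _ i j
    rw [key]
    simp only [Matrix.smul_mulVec, Matrix.one_mulVec, dotProduct_smul, smul_eq_mul]
    rw [hv i i, hv j j]
    simp
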